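/- Let 0 ≤ R₀ < R₁ and let G : ℂ → ℂ be holomorphic on the annulus A(R₀,R₁) = {z ∈ ℂ : R₀ < |z| < R₁}. Suppose that ∫₀^{2π} G(r·e^{iθ})² dθ = 0 for some r with R₀ < r < R₁. Then for every ρ with R₀ < ρ < R₁, ‖∫₀^{2π} G(ρ·e^{iθ}) dθ‖² ≤ π·∫₀^{2π} ‖G(ρ·e^{iθ})‖² dθ. -/

import Mathlib

open Complex Real


lemma key_circle (f : ℝ → ℂ) (hf : Continuous f)
    (h0 : (∫ θ in (0:ℝ)..(2 * π), (f θ) ^ 2) = 0) :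
    ‖∫ θ in (0:ℝ)..(2 * π), f θ‖ ^ 2 ≤ π * ∫ θ in (0:ℝ)..(2 * π), ‖f θ‖ ^ 2 := by
  have hπ : (0:ℝ) < π := Real.pi_pos
  set I0 : ℂ := ∫ θ in (0:ℝ)..(2 * π), f θ with hI0
  set a : ℂ := I0 / (2 * π) with ha
  have h2π : ((2:ℂ) * π) ≠ 0 := by
    simp [Complex.ext_iff, hπ.ne']
  -- integrability
  have hif : IntervalIntegrable f MeasureTheory.volume 0 (2 * π) :=
    hf.intervalIntegrable _ _
  have hif2 : IntervalIntegrable (fun θ => (f θ) ^ 2) MeasureTheory.volume 0 (2 * π) :=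
    (hf.pow 2).intervalIntegrable _ _
  have hifa : IntervalIntegrable (fun θ => 2 * a * f θ) MeasureTheory.volume 0 (2 * π) :=
    (continuous_const.mul hf).intervalIntegrable _ _
  have hnf2 : IntervalIntegrable (fun θ => ‖f θ‖ ^ 2) MeasureTheory.volume 0 (2 * π) :=
    ((hf.norm).pow 2).intervalIntegrable _ _
  -- complex identity
  have h1 : (∫ θ in (0:ℝ)..(2 * π), (f θ - a) ^ 2) = -(I0 ^ 2) / (2 * π) := by
    have e1 : ∀ θ, (f θ - a) ^ 2 = ((f θ) ^ 2 - 2 * a * f θ) + a ^ 2 := fun θ => by ring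
    simp_rw [e1]
    rw [intervalIntegral.integral_add (hif2.sub hifa) (intervalIntegrable_const),
      intervalIntegral.integral_sub hif2 hifa, intervalIntegral.integral_const_mul, h0,
      intervalIntegral.integral_const, ← hI0, ha]
    push_cast [Complex.real_smul]
    field_simp
    ring
  -- real identity
  have h2 : (∫ θ in (0:ℝ)..(2 * π), ‖f θ - a‖ ^ 2)
      = (∫ θ in (0:ℝ)..(2 * π), ‖f θ‖ ^ 2) - ‖I0‖ ^ 2 / (2 * π) := by
    have e2 : ∀ z w : ℂ, ‖z - w‖ ^ 2 = ‖z‖ ^ 2 + ‖w‖ ^ 2 - 2 * (z * (starRingEnd ℂ) w).re := by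
      intro z w
      simp only [Complex.sq_norm, Complex.normSq_apply, Complex.sub_re,
        Complex.sub_im, Complex.mul_re, Complex.conj_re, Complex.conj_im]
      ring
    simp_rw [e2]
    have hre : (∫ θ in (0:ℝ)..(2 * π), (f θ * (starRingEnd ℂ) a).re)
        = (I0 * (starRingEnd ℂ) a).re := by
      have := Complex.reCLM.intervalIntegral_comp_comm
        (f := fun θ => f θ * (starRingEnd ℂ) a) (μ := MeasureTheory.volume) (a := 0) (b := 2 * π)
        ((hf.mul continuous_const).intervalIntegrable _ _)
      simpa only [Complex.reCLM_apply, intervalIntegral.integral_mul_const, ← hI0] using this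
    have hcre : Continuous (fun θ : ℝ => (f θ * (starRingEnd ℂ) a).re) :=
      Complex.continuous_re.comp (hf.mul continuous_const)
    rw [intervalIntegral.integral_sub
        ((hnf2.add intervalIntegrable_const))
        ((show Continuous fun θ : ℝ => (2:ℝ) * (f θ * (starRingEnd ℂ) a).re by fun_prop).intervalIntegrable _ _),
      intervalIntegral.integral_add hnf2 intervalIntegrable_const,
      intervalIntegral.integral_const_mul, hre, intervalIntegral.integral_const]
    have haI : (I0 * (starRingEnd ℂ) a).re = ‖I0‖ ^ 2 / (2 * π) := by
      have : I0 * (starRingEnd ℂ) a = ((‖I0‖ ^ 2 / (2 * π) : ℝ) : ℂ) := by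
        rw [ha, map_div₀, map_mul, map_ofNat, Complex.conj_ofReal, mul_div_assoc',
          Complex.mul_conj]
        push_cast [Complex.normSq_eq_norm_sq]
        ring
      rw [this, Complex.ofReal_re]
    have hna : ‖a‖ ^ 2 = ‖I0‖ ^ 2 / (2 * π) ^ 2 := by
      rw [ha, norm_div]
      simp [abs_of_pos hπ]
      ring
    rw [haI, hna]
    field_simp [hπ.ne']
    have hπ2 : π ^ 2 * π⁻¹ ^ 2 = 1 := by rw [← mul_pow, mul_inv_cancel₀ hπ.ne', one_pow]
    linear_combination (‖I0‖ ^ 2) * hπ2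
  -- inequality
  have h3 : ‖∫ θ in (0:ℝ)..(2 * π), (f θ - a) ^ 2‖
      ≤ ∫ θ in (0:ℝ)..(2 * π), ‖f θ - a‖ ^ 2 := by
    have := intervalIntegral.norm_integral_le_integral_norm
      (f := fun θ => (f θ - a) ^ 2) (μ := MeasureTheory.volume) (a := 0) (b := 2 * π)
      (by positivity)
    simpa [norm_pow] using this
  rw [h1] at h3
  have h4 : ‖-(I0 ^ 2) / (2 * (π:ℂ))‖ = ‖I0‖ ^ 2 / (2 * π) := by
    rw [norm_div, norm_neg, norm_pow]
    norm_num [Complex.norm_real, Real.norm_eq_abs, abs_of_pos hπ]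
  rw [h4, h2] at h3
  have h2p : (0:ℝ) < 2 * π := by positivity
  have h5 := mul_le_mul_of_nonneg_right h3 h2p.le
  rw [div_mul_cancel₀ _ h2p.ne', sub_mul, div_mul_cancel₀ _ h2p.ne'] at h5
  linarith

lemma circ_param (F : ℂ → ℂ) (s : ℝ) (hs : s ≠ 0) :
    (∮ z in C(0, s), (z - 0)⁻¹ • F z)
      = Complex.I * ∫ θ in (0:ℝ)..(2 * π), F ((s:ℂ) * Complex.exp (θ * Complex.I)) := by
  simp only [circleIntegral, deriv_circleMap, sub_zero, smul_eq_mul]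
  rw [← intervalIntegral.integral_const_mul]
  refine intervalIntegral.integral_congr fun θ _ => ?_
  have h : circleMap 0 s θ ≠ 0 := by simpa using circleMap_ne_center (c := (0:ℂ)) hs (θ := θ)
  have hm : circleMap 0 s θ = (s:ℂ) * Complex.exp (θ * Complex.I) := by simp [circleMap]
  rw [hm] at h ⊢
  field_simp
  exact mul_div_cancel_left₀ _ (show (s:ℂ) ≠ 0 by exact_mod_cast hs)

lemma transfer_le (R₀ R₁ : ℝ) (hR₀ : 0 ≤ R₀) (G : ℂ → ℂ)
    (hG : DifferentiableOn ℂ G {z : ℂ | R₀ < ‖z‖ ∧ ‖z‖ < R₁})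
    (r₁ r₂ : ℝ) (h1 : R₀ < r₁) (h12 : r₁ ≤ r₂) (h2 : r₂ < R₁) :
    (∫ θ in (0:ℝ)..(2 * π), (G ((r₁:ℂ) * Complex.exp (θ * Complex.I))) ^ 2)
      = ∫ θ in (0:ℝ)..(2 * π), (G ((r₂:ℂ) * Complex.exp (θ * Complex.I))) ^ 2 := by
  have hr1 : 0 < r₁ := lt_of_le_of_lt hR₀ h1
  have hr2 : 0 < r₂ := lt_of_lt_of_le hr1 h12
  have hopen : IsOpen {z : ℂ | R₀ < ‖z‖ ∧ ‖z‖ < R₁} :=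
    (isOpen_lt continuous_const continuous_norm).inter
      (isOpen_lt continuous_norm continuous_const)
  have hsub : Metric.closedBall (0:ℂ) r₂ \ Metric.ball 0 r₁
      ⊆ {z : ℂ | R₀ < ‖z‖ ∧ ‖z‖ < R₁} := by
    intro z hz
    obtain ⟨hz1, hz2⟩ := hz
    simp only [Metric.mem_closedBall, Complex.dist_eq, sub_zero] at hz1
    simp only [Metric.mem_ball, Complex.dist_eq, sub_zero, not_lt] at hz2
    exact ⟨lt_of_lt_of_le h1 hz2, lt_of_le_of_lt hz1 h2⟩
  have hdiff : ∀ z ∈ (Metric.ball (0:ℂ) r₂ \ Metric.closedBall 0 r₁) \ (∅ : Set ℂ),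
      DifferentiableAt ℂ (fun z => (G z) ^ 2) z := by
    intro z hz
    obtain ⟨⟨hz1, hz2⟩, -⟩ := hz
    simp only [Metric.mem_ball, Complex.dist_eq, sub_zero] at hz1
    simp only [Metric.mem_closedBall, Complex.dist_eq, sub_zero, not_le] at hz2
    have hmem : z ∈ {z : ℂ | R₀ < ‖z‖ ∧ ‖z‖ < R₁} :=
      ⟨lt_of_lt_of_le h1 hz2.le, lt_of_lt_of_le hz1 (le_of_lt h2)⟩
    exact ((hG z hmem).differentiableAt (hopen.mem_nhds hmem)).pow 2
  have hcont : ContinuousOn (fun z => (G z) ^ 2)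
      (Metric.closedBall (0:ℂ) r₂ \ Metric.ball 0 r₁) :=
    ((hG.continuousOn.mono hsub).pow 2)
  have key := Complex.circleIntegral_sub_center_inv_smul_eq_of_differentiable_on_annulus_off_countable
    (c := (0:ℂ)) (r := r₁) (R := r₂) hr1 h12 Set.countable_empty hcont hdiff
  rw [circ_param _ _ hr1.ne', circ_param _ _ hr2.ne'] at key
  exact mul_left_cancel₀ Complex.I_ne_zero key.symm
/-- If the circle integral of `G²` vanishes on some circle in the annulus, then
on every circle `‖∫₀^{2π} G dθ‖² ≤ π ∫₀^{2π} ‖G‖² dθ`. -/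
theorem stmt_10 (R₀ R₁ : ℝ) (hR₀ : 0 ≤ R₀) (hR : R₀ < R₁) (G : ℂ → ℂ)
    (hG : DifferentiableOn ℂ G
      {z : ℂ | R₀ < ‖z‖ ∧ ‖z‖ < R₁})
    (r : ℝ) (hr₀ : R₀ < r) (hr₁ : r < R₁)
    (hint : ∫ θ in (0:ℝ)..(2 * π),
        (G ((r : ℂ) * Complex.exp (θ * Complex.I))) ^ 2 = 0) :
    ∀ ρ : ℝ, R₀ < ρ → ρ < R₁ →
      ‖∫ θ in (0:ℝ)..(2 * π), G ((ρ : ℂ) * Complex.exp (θ * Complex.I))‖ ^ 2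
        ≤ π * ∫ θ in (0:ℝ)..(2 * π),
            ‖G ((ρ : ℂ) * Complex.exp (θ * Complex.I))‖ ^ 2 := by
  intro ρ hρ₀ hρ₁
  have hρpos : 0 < ρ := lt_of_le_of_lt hR₀ hρ₀
  have hf : Continuous fun θ : ℝ => G ((ρ:ℂ) * Complex.exp (θ * Complex.I)) := by
    have hmap : ∀ θ : ℝ, (ρ:ℂ) * Complex.exp (θ * Complex.I)
        ∈ {z : ℂ | R₀ < ‖z‖ ∧ ‖z‖ < R₁} := by
      intro θ
      simp only [Set.mem_setOf_eq, norm_mul, Complex.norm_exp_ofReal_mul_I, mul_one,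
        Complex.norm_real, Real.norm_eq_abs, abs_of_pos hρpos]
      exact ⟨hρ₀, hρ₁⟩
    have hc : Continuous fun θ : ℝ => (ρ:ℂ) * Complex.exp (θ * Complex.I) :=
      continuous_const.mul (Complex.continuous_exp.comp
        (Complex.continuous_ofReal.mul continuous_const))
    exact hG.continuousOn.comp_continuous hc hmap
  have h0 : (∫ θ in (0:ℝ)..(2 * π), (G ((ρ:ℂ) * Complex.exp (θ * Complex.I))) ^ 2) = 0 := by
    rcases le_total r ρ with h | h
    · rw [← transfer_le R₀ R₁ hR₀ G hG r ρ hr₀ h hρ₁]; exact hint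
    · rw [transfer_le R₀ R₁ hR₀ G hG ρ r hρ₀ h hr₁]; exact hint
  exact key_circle _ hf h0
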